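/- Let Φ : ℝ^n → ℝ^{m+1} be twice continuously differentiable, x̄ with Φ(x̄) = 0, and λ̄ ∈ −Q with ∇Φ(x̄)*λ̄ = x̄*. Then the dual qualification condition (DN_Q)(0,λ̄)(0) ∩ ker ∇Φ(x̄)* = {0} holds if and only if the strict Robinson constraint qualification holds: ∇Φ(x̄)(ℝ^n) − (Q ∩ {λ̄}^⊥) = ℝ^{m+1} (note T_Q(Φ(x̄)) = T_Q(0) = Q). -/

import Mathlib

open scoped RealInnerProductSpace Pointwise
open Filter Topology Metric Set Classical

noncomputable section

abbrev Em (m : ℕ) := WithLp 2 (ℝ × EuclideanSpace ℝ (Fin m))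

namespace SOC

def mk2 {α β : Type*} (a : α) (b : β) : WithLp 2 (α × β) := (WithLp.equiv 2 (α × β)).symm (a, b)

def Q (m : ℕ) : Set (Em m) := {s | ‖s.ofLp.2‖ ≤ s.ofLp.1}

variable {H : Type*} [NormedAddCommGroup H] [InnerProductSpace ℝ H]

def normalCone (C : Set H) (x : H) : Set H :=
  {y | x ∈ C ∧ ∀ z ∈ C, ⟪y, z - x⟫ ≤ 0}

def tangentCone (Ω : Set H) (z : H) : Set H :=
  {w | ∃ t : ℕ → ℝ, ∃ wk : ℕ → H, (∀ k, 0 < t k) ∧ Tendsto t atTop (𝓝 0) ∧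
    Tendsto wk atTop (𝓝 w) ∧ ∀ k, z + t k • wk k ∈ Ω}

def regularNormalCone (Ω : Set H) (z : H) : Set H :=
  {v | z ∈ Ω ∧ ∀ ε > 0, ∀ᶠ w in 𝓝[Ω \ {z}] z, ⟪v, w - z⟫ ≤ ε * ‖w - z‖}

def limitingNormalCone (Ω : Set H) (z : H) : Set H :=
  {v | ∃ zk : ℕ → H, ∃ vk : ℕ → H, (∀ k, vk k ∈ regularNormalCone Ω (zk k)) ∧
    Tendsto zk atTop (𝓝 z) ∧ Tendsto vk atTop (𝓝 v)}

variable {n m : ℕ}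

/-- The constraint set `Γ = {x | Φ(x) ∈ Q}`. -/
def Gamma (Φ : EuclideanSpace ℝ (Fin n) → Em m) : Set (EuclideanSpace ℝ (Fin n)) :=
  {x | Φ x ∈ Q m}

/-- Metric subregularity constraint qualification with modulus `κ`. -/
def MSCQmod (Φ : EuclideanSpace ℝ (Fin n) → Em m) (xb : EuclideanSpace ℝ (Fin n)) (κ : ℝ) : Prop :=
  ∃ U ∈ 𝓝 xb, ∀ x ∈ U, infDist x (Gamma Φ) ≤ κ * infDist (Φ x) (Q m)

def MSCQ (Φ : EuclideanSpace ℝ (Fin n) → Em m) (xb : EuclideanSpace ℝ (Fin n)) : Prop :=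
  ∃ κ > 0, MSCQmod Φ xb κ

/-- Lagrange multiplier set `Λ(x,x*)`. -/
def Lambda (Φ : EuclideanSpace ℝ (Fin n) → Em m) (x xs : EuclideanSpace ℝ (Fin n)) : Set (Em m) :=
  {lam | lam ∈ normalCone (Q m) (Φ x) ∧ ContinuousLinearMap.adjoint (fderiv ℝ Φ x) lam = xs}

/-- Critical cone `K(x,x*) = T_Γ(x) ∩ {x*}^⊥`. -/
def Kcone (Φ : EuclideanSpace ℝ (Fin n) → Em m) (x xs : EuclideanSpace ℝ (Fin n)) :
    Set (EuclideanSpace ℝ (Fin n)) :=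
  tangentCone (Gamma Φ) x ∩ {v | ⟪xs, v⟫ = 0}

/-- `x ↦ Φ̂(x) = (−Φ₀(x), Φ_r(x))`. -/
def hatFun (Φ : EuclideanSpace ℝ (Fin n) → Em m) (x : EuclideanSpace ℝ (Fin n)) : Em m :=
  mk2 (-(Φ x).ofLp.1) (Φ x).ofLp.2

/-- Hessian of `x ↦ ⟨λ, Φ(x)⟩` at `x`, as a linear map (derivative of the gradient). -/
def hessLam (Φ : EuclideanSpace ℝ (Fin n) → Em m) (x : EuclideanSpace ℝ (Fin n)) (lam : Em m) :
    EuclideanSpace ℝ (Fin n) →L[ℝ] EuclideanSpace ℝ (Fin n) :=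
  fderiv ℝ (fun y => ContinuousLinearMap.adjoint (fderiv ℝ Φ y) lam) x

/-- The curvature term `H(x;λ)`. -/

def Hmap (Φ : EuclideanSpace ℝ (Fin n) → Em m) (x : EuclideanSpace ℝ (Fin n)) (lam : Em m) :
    EuclideanSpace ℝ (Fin n) →L[ℝ] EuclideanSpace ℝ (Fin n) :=
  if Φ x ∈ frontier (Q m) \ {0} then
    (-(lam.ofLp.1 / (Φ x).ofLp.1)) •
      ((ContinuousLinearMap.adjoint (fderiv ℝ (hatFun Φ) x)).comp (fderiv ℝ Φ x))
  else 0

/-- `∇²⟨λ,Φ⟩(x) + H(x;λ)`. -/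
def Gmap (Φ : EuclideanSpace ℝ (Fin n) → Em m) (x : EuclideanSpace ℝ (Fin n)) (lam : Em m) :
    EuclideanSpace ℝ (Fin n) →L[ℝ] EuclideanSpace ℝ (Fin n) :=
  hessLam Φ x lam + Hmap Φ x lam

/-- `Λ(x,x*;v)`: minimizers of `λ ↦ −⟨v, (∇²⟨λ,Φ⟩(x)+H(x;λ))v⟩` over `Λ(x,x*)`. -/
def LambdaV (Φ : EuclideanSpace ℝ (Fin n) → Em m) (x xs v : EuclideanSpace ℝ (Fin n)) :
    Set (Em m) :=
  {lam ∈ Lambda Φ x xs | ∀ mu ∈ Lambda Φ x xs,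
    -⟪v, Gmap Φ x lam v⟫ ≤ -⟪v, Gmap Φ x mu v⟫}

/-- Graph of the limiting normal cone mapping `N_Γ`, inside `ℝ^n × ℝ^n` with the ℓ² norm. -/
def gphNGamma (Φ : EuclideanSpace ℝ (Fin n) → Em m) :
    Set (WithLp 2 (EuclideanSpace ℝ (Fin n) × EuclideanSpace ℝ (Fin n))) :=
  {p | p.ofLp.2 ∈ limitingNormalCone (Gamma Φ) p.ofLp.1}

/-- Second derivative `D²Φ(x)[v,v]`. -/
def D2 (Φ : EuclideanSpace ℝ (Fin n) → Em m) (x v : EuclideanSpace ℝ (Fin n)) : Em m :=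
  fderiv ℝ (fderiv ℝ Φ) x v v

end SOC

namespace SOC

/-- Graph of the normal cone mapping `N_Q`. -/
def gphNQ (m : ℕ) : Set (WithLp 2 (Em m × Em m)) :=
  {p | p.ofLp.2 ∈ normalCone (Q m) p.ofLp.1}

end SOC

namespace SOC

variable {m : ℕ}

lemma inner_em (x y : Em m) : ⟪x, y⟫ = x.ofLp.1 * y.ofLp.1 + ⟪x.ofLp.2, y.ofLp.2⟫ := by
  rw [WithLp.prod_inner_apply, RCLike.inner_apply', conj_trivial]

lemma mem_Q_iff {x : Em m} : x ∈ Q m ↔ ‖x.ofLp.2‖ ≤ x.ofLp.1 := Iff.rfl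

lemma mem_negQ_iff {x : Em m} : x ∈ -Q m ↔ ‖x.ofLp.2‖ ≤ -x.ofLp.1 := by
  rw [Set.mem_neg]
  have h1 : (-x).ofLp.1 = -x.ofLp.1 := rfl
  have h2 : (-x).ofLp.2 = -x.ofLp.2 := rfl
  rw [mem_Q_iff, h1, h2, norm_neg]

lemma Q_zero : (0 : Em m) ∈ Q m := by
  have h1 : (0 : Em m).ofLp.1 = 0 := rfl
  have h2 : (0 : Em m).ofLp.2 = 0 := rfl
  rw [mem_Q_iff, h1, h2, norm_zero]

lemma Q_add {x y : Em m} (hx : x ∈ Q m) (hy : y ∈ Q m) : x + y ∈ Q m := by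
  have h1 : (x + y).ofLp.1 = x.ofLp.1 + y.ofLp.1 := rfl
  have h2 : (x + y).ofLp.2 = x.ofLp.2 + y.ofLp.2 := rfl
  rw [mem_Q_iff, h1, h2]
  exact (norm_add_le _ _).trans (add_le_add hx hy)

lemma Q_smul {t : ℝ} (ht : 0 ≤ t) {x : Em m} (hx : x ∈ Q m) : t • x ∈ Q m := by
  have h1 : (t • x).ofLp.1 = t * x.ofLp.1 := rfl
  have h2 : (t • x).ofLp.2 = t • x.ofLp.2 := rfl
  rw [mem_Q_iff, h1, h2, norm_smul, Real.norm_eq_abs, abs_of_nonneg ht]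
  exact mul_le_mul_of_nonneg_left hx ht

lemma inner_nonpos_QnegQ {q y : Em m} (hq : q ∈ Q m) (hy : y ∈ -Q m) : ⟪q, y⟫ ≤ 0 := by
  rw [mem_negQ_iff] at hy
  rw [mem_Q_iff] at hq
  have h1 : ⟪q.ofLp.2, y.ofLp.2⟫ ≤ ‖q.ofLp.2‖ * ‖y.ofLp.2‖ := real_inner_le_norm _ _
  have h0 : (0:ℝ) ≤ ‖q.ofLp.2‖ := norm_nonneg _
  have h0' : (0:ℝ) ≤ ‖y.ofLp.2‖ := norm_nonneg _
  rw [inner_em]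
  nlinarith

lemma inner_nonneg_QQ {q x : Em m} (hq : q ∈ Q m) (hx : x ∈ Q m) : 0 ≤ ⟪q, x⟫ := by
  have hnx : -x ∈ -Q m := Set.neg_mem_neg.mpr hx
  have := inner_nonpos_QnegQ hq hnx
  rw [inner_neg_right] at this
  linarith

lemma mem_Q_of_dual {y : Em m} (h : ∀ q ∈ Q m, 0 ≤ ⟪q, y⟫) : y ∈ Q m := by
  have hq1 : (mk2 1 0 : Em m) ∈ Q m := by
    rw [mem_Q_iff]
    show ‖(0 : EuclideanSpace ℝ (Fin m))‖ ≤ (1:ℝ)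
    simp
  have h1 := h _ hq1
  rw [inner_em] at h1
  have h1' : 0 ≤ y.ofLp.1 := by
    have e1 : (mk2 1 0 : Em m).ofLp.1 = 1 := rfl
    have e2 : (mk2 1 0 : Em m).ofLp.2 = 0 := rfl
    rw [e1, e2, inner_zero_left] at h1
    linarith
  rcases eq_or_lt_of_le (norm_nonneg y.ofLp.2) with hz | hz
  · rw [mem_Q_iff, ← hz]; exact h1'
  · have hq2 : (mk2 ‖y.ofLp.2‖ (-y.ofLp.2) : Em m) ∈ Q m := by
      rw [mem_Q_iff]
      show ‖-y.ofLp.2‖ ≤ ‖y.ofLp.2‖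
      rw [norm_neg]
    have h2 := h _ hq2
    rw [inner_em] at h2
    have e1 : (mk2 ‖y.ofLp.2‖ (-y.ofLp.2) : Em m).ofLp.1 = ‖y.ofLp.2‖ := rfl
    have e2 : (mk2 ‖y.ofLp.2‖ (-y.ofLp.2) : Em m).ofLp.2 = -y.ofLp.2 := rfl
    rw [e1, e2, inner_neg_left, real_inner_self_eq_norm_sq] at h2
    rw [mem_Q_iff]
    nlinarith

lemma mem_negQ_of_dual {y : Em m} (h : ∀ q ∈ Q m, ⟪q, y⟫ ≤ 0) : y ∈ -Q m := by
  have : -y ∈ Q m := mem_Q_of_dual fun q hq => by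
    rw [inner_neg_right]; linarith [h q hq]
  rwa [Set.mem_neg]

lemma negQ_sub_normalCone {y : Em m} (hy : y ∈ -Q m) : y ∈ normalCone (Q m) 0 := by
  refine ⟨Q_zero, fun z hz => ?_⟩
  rw [sub_zero, real_inner_comm]
  exact inner_nonpos_QnegQ hz hy


lemma snd_tendsto {wk : ℕ → WithLp 2 (Em m × Em m)} {w : WithLp 2 (Em m × Em m)}
    (h : Tendsto wk atTop (𝓝 w)) : Tendsto (fun k => (wk k).ofLp.2) atTop (𝓝 w.ofLp.2) := by
  have hc : Continuous fun p : WithLp 2 (Em m × Em m) => p.ofLp.2 :=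
    continuous_snd.comp (WithLp.prod_continuous_ofLp 2 (Em m) (Em m))
  exact (hc.tendsto w).comp h

lemma tangent_subset_pol (lamb : Em m) (v : Em m)
    (hv : mk2 (0 : Em m) v ∈ tangentCone (gphNQ m) (mk2 (0:Em m) lamb)) :
    ∀ q ∈ Q m, ⟪q, lamb⟫ = 0 → ⟪q, v⟫ ≤ 0 := by
  obtain ⟨t, wk, htpos, ht0, hwk, hmem⟩ := hv
  intro q hq hql
  have key : ∀ k, ⟪q, (wk k).ofLp.2⟫ ≤ 0 := by
    intro k
    obtain ⟨hxQ, hyn⟩ := hmem k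
    have hz := hyn (q + (mk2 (0:Em m) lamb + t k • wk k).ofLp.1) (Q_add hq hxQ)
    rw [add_sub_cancel_right] at hz
    have h2 : (mk2 (0:Em m) lamb + t k • wk k).ofLp.2 = lamb + t k • (wk k).ofLp.2 := rfl
    rw [h2, inner_add_left, real_inner_smul_left] at hz
    have hlq : ⟪lamb, q⟫ = 0 := by rw [real_inner_comm]; exact hql
    rw [hlq, zero_add] at hz
    have htk := htpos k
    rw [real_inner_comm]
    nlinarith
  have hsnd : Tendsto (fun k => (wk k).ofLp.2) atTop (𝓝 v) := by
    have := snd_tendsto hwk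
    have hv2 : (mk2 (0:Em m) v).ofLp.2 = v := rfl
    rwa [hv2] at this
  have hlim : Tendsto (fun k => ⟪q, (wk k).ofLp.2⟫) atTop (𝓝 ⟪q, v⟫) :=
    Filter.Tendsto.inner tendsto_const_nhds hsnd
  exact le_of_tendsto hlim (Filter.Eventually.of_forall key)


/-- The convex cone generated by `Q + lamb`. -/
def Rcone (m : ℕ) (lamb : Em m) : ConvexCone ℝ (Em m) where
  carrier := {x | ∃ t : ℝ, 0 ≤ t ∧ ∃ q ∈ Q m, x = t • (q + lamb)}
  smul_mem' := by
    rintro c hc x ⟨t, ht, q, hq, rfl⟩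
    exact ⟨c * t, mul_nonneg hc.le ht, q, hq, smul_smul c t _⟩
  add_mem' := by
    rintro x ⟨t1, ht1, q1, hq1, rfl⟩ y ⟨t2, ht2, q2, hq2, rfl⟩
    rcases eq_or_lt_of_le (add_nonneg ht1 ht2) with hs | hs
    · have h1 : t1 = 0 := by linarith
      have h2 : t2 = 0 := by linarith
      refine ⟨0, le_rfl, 0, Q_zero, ?_⟩
      rw [h1, h2]; simp
    · refine ⟨t1 + t2, (add_nonneg ht1 ht2), (t1/(t1+t2)) • q1 + (t2/(t1+t2)) • q2,
        Q_add (Q_smul (by positivity) hq1) (Q_smul (by positivity) hq2), ?_⟩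
      have hne : t1 + t2 ≠ 0 := ne_of_gt hs
      match_scalars <;> field_simp
  
lemma mem_Rcone_iff {lamb x : Em m} :
    x ∈ Rcone m lamb ↔ ∃ t : ℝ, 0 ≤ t ∧ ∃ q ∈ Q m, x = t • (q + lamb) := Iff.rfl

lemma Rcone_dual (lamb : Em m) (hlam1 : lamb ∈ -Q m) {y : Em m}
    (h : ∀ x ∈ ((Rcone m lamb).closure : Set (Em m)), 0 ≤ ⟪x, y⟫) :
    y ∈ Q m ∧ ⟪y, lamb⟫ = 0 := by
  have hR : ∀ x ∈ (Rcone m lamb : Set (Em m)), 0 ≤ ⟪x, y⟫ := by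
    intro x hx
    exact h x (by rw [ConvexCone.coe_closure]; exact subset_closure hx)
  have hlamy : 0 ≤ ⟪lamb, y⟫ := by
    have := hR (1 • ((0:Em m) + lamb)) ⟨1, zero_le_one, 0, Q_zero, rfl⟩
    simpa using this
  have hQy : ∀ q ∈ Q m, 0 ≤ ⟪q, y⟫ := by
    intro q hq
    by_contra hneg
    push_neg at hneg
    set a := ⟪q, y⟫ with ha
    set c := ⟪lamb, y⟫ with hc
    have hs : (0:ℝ) ≤ (c + 1) / (-a) := div_nonneg (by linarith) (by linarith)
    have := hR (1 • ((((c+1)/(-a)) • q) + lamb)) ⟨1, zero_le_one, _, Q_smul hs hq, rfl⟩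
    rw [one_smul, inner_add_left, real_inner_smul_left] at this
    have hane : (-a) ≠ 0 := by linarith
    have he2 : (c + 1) / (-a) * (-a) = c + 1 := div_mul_cancel₀ _ hane
    nlinarith [this, he2]
  have hyQ : y ∈ Q m := mem_Q_of_dual hQy
  have hyl : ⟪y, lamb⟫ ≤ 0 := inner_nonpos_QnegQ hyQ hlam1
  refine ⟨hyQ, le_antisymm hyl ?_⟩
  rw [real_inner_comm]; exact hlamy

lemma dual_Rcone (lamb : Em m) {x y : Em m} (hy : y ∈ Q m) (hyl : ⟪y, lamb⟫ = 0)
    (hx : x ∈ ((Rcone m lamb).closure : Set (Em m))) : 0 ≤ ⟪x, y⟫ := by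
  rw [ConvexCone.coe_closure] at hx
  have hcl : IsClosed {z : Em m | 0 ≤ ⟪z, y⟫} :=
    isClosed_le continuous_const (Continuous.inner continuous_id continuous_const)
  refine closure_minimal ?_ hcl hx
  rintro z ⟨t, ht, q, hq, rfl⟩
  show 0 ≤ ⟪t • (q + lamb), y⟫
  rw [real_inner_smul_left, inner_add_left]
  have h1 : 0 ≤ ⟪q, y⟫ := inner_nonneg_QQ hq hy
  have h2 : ⟪lamb, y⟫ = 0 := by rw [real_inner_comm]; exact hyl
  rw [h2]
  exact mul_nonneg ht (by linarith)


lemma sep_helper (K : ConvexCone ℝ (Em m)) (hne : (K.closure : Set (Em m)).Nonempty)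
    {x : Em m} (hx : x ∉ K.closure) :
    ∃ y : Em m, (∀ z ∈ (K.closure : Set (Em m)), 0 ≤ ⟪z, y⟫) ∧ ⟪y, x⟫ < 0 := by
  have hcl : IsClosed (K.closure : Set (Em m)) := by
    rw [ConvexCone.coe_closure]; exact isClosed_closure
  obtain ⟨C, hC⟩ := CanLift.prf (β := ProperCone ℝ (Em m)) K.closure ⟨hne, hcl⟩
  have hxC : x ∉ C := by
    intro h; apply hx; rw [← hC]; exact h
  obtain ⟨y, hy1, hy2⟩ := ProperCone.hyperplane_separation' C hxC
  refine ⟨y, fun z hz => hy1 z ?_, by rw [real_inner_comm]; exact hy2⟩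
  rw [← hC] at hz; exact hz

lemma dd_helper (K : ConvexCone ℝ (Em m)) (hne : (K.closure : Set (Em m)).Nonempty)
    {x : Em m} (h : ∀ y : Em m, (∀ z ∈ (K.closure : Set (Em m)), 0 ≤ ⟪z, y⟫) → 0 ≤ ⟪y, x⟫) :
    x ∈ (K.closure : Set (Em m)) := by
  by_contra hx
  obtain ⟨y, hy1, hy2⟩ := sep_helper K hne hx
  linarith [h y hy1]

lemma pol_mem_closure_Rcone (lamb : Em m) (hlam1 : lamb ∈ -Q m) {v : Em m}
    (hv : ∀ q ∈ Q m, ⟪q, lamb⟫ = 0 → ⟪q, v⟫ ≤ 0) :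
    -v ∈ closure ((Rcone m lamb : Set (Em m))) := by
  have hmem : ∀ x : Em m, (∀ z ∈ ((Rcone m lamb).closure : Set (Em m)), 0 ≤ ⟪z, x⟫) →
      0 ≤ ⟪x, -v⟫ := by
    intro x hx
    obtain ⟨hxQ, hxl⟩ := Rcone_dual lamb hlam1 (fun z hz => hx z hz)
    have := hv x hxQ (by rw [real_inner_comm] at hxl ⊢; exact hxl)
    rw [inner_neg_right]
    linarith
  have hmem' := dd_helper (Rcone m lamb)
    ⟨0, by rw [ConvexCone.coe_closure]; exact subset_closure ⟨0, le_rfl, 0, Q_zero, by simp⟩⟩ hmem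
  rw [← ConvexCone.coe_closure]
  exact hmem'

lemma pol_subset_tangent (lamb : Em m) (hlam1 : lamb ∈ -Q m) (v : Em m)
    (hv : ∀ q ∈ Q m, ⟪q, lamb⟫ = 0 → ⟪q, v⟫ ≤ 0) :
    mk2 (0 : Em m) v ∈ tangentCone (gphNQ m) (mk2 (0:Em m) lamb) := by
  have hcl := pol_mem_closure_Rcone lamb hlam1 hv
  -- extract approximating sequence
  have hex : ∀ k : ℕ, ∃ b ∈ (Rcone m lamb : Set (Em m)), dist (-v) b < 1/(k+1) := by
    intro k
    exact Metric.mem_closure_iff.mp hcl _ (by positivity)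
  choose b hbR hbd using hex
  choose s hs q hq hbeq using hbR
  -- the sequences
  set vk : ℕ → Em m := fun k => -(b k) with hvk
  set t : ℕ → ℝ := fun k => 1/((k+1)*(1 + s k)) with ht
  have htpos : ∀ k, 0 < t k := by
    intro k
    have h1 : (0:ℝ) < 1 + s k := by linarith [hs k]
    have h2 : (0:ℝ) < (k:ℝ)+1 := by positivity
    exact one_div_pos.mpr (mul_pos h2 h1)
  have hts : ∀ k, 0 ≤ t k * s k ∧ t k * s k ≤ 1 := by
    intro k
    constructor
    · exact mul_nonneg (htpos k).le (hs k)
    · rw [ht]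
      have h1 : (0:ℝ) < ((k:ℝ)+1)*(1+s k) := by
        have h1a : (0:ℝ) < 1 + s k := by linarith [hs k]
        exact mul_pos (by positivity) h1a
      rw [div_mul_eq_mul_div, one_mul, div_le_one h1]
      have hk1 : (1:ℝ) ≤ (k:ℝ)+1 := by
        have := Nat.cast_nonneg (α := ℝ) k
        linarith
      nlinarith [hs k]
  have ht0 : Tendsto t atTop (𝓝 0) := by
    have hub : ∀ k : ℕ, t k ≤ 1/(k+1) := by
      intro k
      rw [ht]
      apply one_div_le_one_div_of_le (by positivity : (0:ℝ) < (k:ℝ)+1)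
      have := Nat.cast_nonneg (α := ℝ) k
      nlinarith [hs k]
    have hlb : ∀ k : ℕ, 0 ≤ t k := fun k => (htpos k).le
    exact squeeze_zero hlb hub tendsto_one_div_add_atTop_nhds_zero_nat
  have hvkv : Tendsto vk atTop (𝓝 v) := by
    rw [tendsto_iff_dist_tendsto_zero]
    have hd : ∀ k, dist (vk k) v = dist (-v) (b k) := by
      intro k
      rw [hvk]
      rw [show v = -(-v) by rw [neg_neg]]
      rw [dist_neg_neg, dist_comm]
      simp
    refine squeeze_zero (fun k => dist_nonneg) (fun k => ?_) tendsto_one_div_add_atTop_nhds_zero_nat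
    rw [hd k]
    exact (hbd k).le
  refine ⟨t, fun k => mk2 0 (vk k), htpos, ht0, ?_, ?_⟩
  · -- tendsto in the product
    have hcont : Continuous fun p : Em m × Em m => (WithLp.equiv 2 (Em m × Em m)).symm p :=
      WithLp.prod_continuous_toLp 2 (Em m) (Em m)
    have hpair : Tendsto (fun k => ((0 : Em m), vk k)) atTop (𝓝 ((0:Em m), v)) :=
      Tendsto.prodMk_nhds tendsto_const_nhds hvkv
    exact (hcont.tendsto _).comp hpair
  · intro k
    show (mk2 (0:Em m) lamb + t k • mk2 (0:Em m) (vk k)).ofLp.2 ∈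
      normalCone (Q m) ((mk2 (0:Em m) lamb + t k • mk2 (0:Em m) (vk k)).ofLp.1)
    have h1 : (mk2 (0:Em m) lamb + t k • mk2 (0:Em m) (vk k)).ofLp.1 = 0 := by
      show (0 : Em m) + t k • (0 : Em m) = 0
      simp
    have h2 : (mk2 (0:Em m) lamb + t k • mk2 (0:Em m) (vk k)).ofLp.2 = lamb + t k • vk k := rfl
    rw [h1, h2]
    apply negQ_sub_normalCone
    rw [Set.mem_neg]
    have heq : -(lamb + t k • vk k) = (1 - t k * s k) • (-lamb) + (t k * s k) • (q k) := by
      rw [hvk]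
      simp only []
      rw [hbeq k]
      module
    rw [heq]
    exact Q_add (Q_smul (by linarith [(hts k).2]) (Set.mem_neg.mp hlam1))
      (Q_smul (hts k).1 (hq k))


end SOC

open SOC in
/-- Theorem 4.6, (ii) ⟺ (iii): the dual qualification condition is equivalent to the
strict Robinson constraint qualification `∇Φ(x̄)ℝⁿ − (Q ∩ {λ̄}^⊥) = ℝ^{m+1}`. -/
theorem dual_qualification_iff_strict_Robinson_CQ
    {n m : ℕ} (Φ : EuclideanSpace ℝ (Fin n) → Em m) (hΦ : ContDiff ℝ 2 Φ)
    (xb : EuclideanSpace ℝ (Fin n)) (hxb : Φ xb = 0)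
    (xs : EuclideanSpace ℝ (Fin n))
    (lamb : Em m) (hlam1 : lamb ∈ -(Q m))
    (hlam2 : ContinuousLinearMap.adjoint (fderiv ℝ Φ xb) lamb = xs) :
    ({w : Em m | mk2 (0 : Em m) w ∈ tangentCone (gphNQ m) (mk2 (0 : Em m) lamb)} ∩
      {w : Em m | ContinuousLinearMap.adjoint (fderiv ℝ Φ xb) w = 0} = {0})
    ↔
    ({z : Em m | ∃ u : EuclideanSpace ℝ (Fin n), ∃ q ∈ Q m,
        ⟪q, lamb⟫ = 0 ∧ z = (fderiv ℝ Φ xb) u - q} = Set.univ) := by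
  classical
  set A := fderiv ℝ Φ xb with hA
  have hset : {w : Em m | mk2 (0 : Em m) w ∈ tangentCone (gphNQ m) (mk2 (0 : Em m) lamb)} =
      {v : Em m | ∀ q ∈ Q m, ⟪q, lamb⟫ = 0 → ⟪q, v⟫ ≤ 0} :=
    Set.ext fun v => ⟨fun h => tangent_subset_pol lamb v h,
      fun h => pol_subset_tangent lamb hlam1 v h⟩
  rw [hset]
  set D := {z : Em m | ∃ u : EuclideanSpace ℝ (Fin n), ∃ q ∈ Q m,
      ⟪q, lamb⟫ = 0 ∧ z = A u - q} with hDdef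
  have hzeroD : (0 : Em m) ∈ D := ⟨0, 0, Q_zero, inner_zero_left _, by simp⟩
  constructor
  · intro hLHS
    -- D is a convex cone
    let Dcone : ConvexCone ℝ (Em m) :=
      { carrier := D
        smul_mem' := by
          rintro c hc z ⟨u, q, hq, hql, rfl⟩
          exact ⟨c • u, c • q, Q_smul hc.le hq,
            by rw [real_inner_smul_left, hql, mul_zero],
            by rw [map_smul, smul_sub]⟩
        add_mem' := by
          rintro z1 ⟨u1, q1, hq1, hql1, rfl⟩ z2 ⟨u2, q2, hq2, hql2, rfl⟩
          exact ⟨u1 + u2, q1 + q2, Q_add hq1 hq2,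
            by rw [inner_add_left, hql1, hql2, add_zero],
            by rw [map_add]; abel⟩ }
    have hDcoe : (Dcone : Set (Em m)) = D := rfl
    have hDsubcl : D ⊆ (Dcone.closure : Set (Em m)) := by
      rw [ConvexCone.coe_closure, hDcoe]; exact subset_closure
    have hDcl : closure D = univ := by
      by_contra hne
      obtain ⟨w, hw⟩ := (Set.ne_univ_iff_exists_notMem _).mp hne
      have hwn : w ∉ Dcone.closure := by
        intro hmem
        exact hw (by rw [← hDcoe, ← ConvexCone.coe_closure]; exact hmem)
      obtain ⟨y, hy1, hy2⟩ :=
        sep_helper Dcone ⟨0, hDsubcl hzeroD⟩ hwn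
      have hAu : ∀ u, ⟪A u, y⟫ = 0 := by
        intro u
        have hp : A u ∈ D := ⟨u, 0, Q_zero, inner_zero_left _, by simp⟩
        have hm : -(A u) ∈ D := ⟨-u, 0, Q_zero, inner_zero_left _, by simp⟩
        have h1 := hy1 _ (hDsubcl hp)
        have h2 := hy1 _ (hDsubcl hm)
        rw [inner_neg_left] at h2
        linarith
      have hker : ContinuousLinearMap.adjoint A y = 0 := by
        rw [← inner_self_eq_zero (𝕜 := ℝ)]
        rw [ContinuousLinearMap.adjoint_inner_left, real_inner_comm]
        exact hAu _
      have hpol : y ∈ {v : Em m | ∀ q ∈ Q m, ⟪q, lamb⟫ = 0 → ⟪q, v⟫ ≤ 0} := by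
        intro q hq hql
        have hnq : -q ∈ D := ⟨0, q, hq, hql, by simp⟩
        have := hy1 _ (hDsubcl hnq)
        rw [inner_neg_left] at this
        linarith
      have hy0 : y = 0 := by
        have : y ∈ ({0} : Set (Em m)) := by
          rw [← hLHS]; exact ⟨hpol, hker⟩
        exact this
      rw [hy0, inner_zero_left] at hy2
      exact lt_irrefl 0 hy2
    -- interior argument
    have hconv : Convex ℝ D := by rw [← hDcoe]; exact Dcone.convex
    have hspan : affineSpan ℝ D = ⊤ := by
      have hcl : IsClosed ((affineSpan ℝ D : AffineSubspace ℝ (Em m)) : Set (Em m)) :=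
        (affineSpan ℝ D).closed_of_finiteDimensional
      have h1 : closure D ⊆ ((affineSpan ℝ D : AffineSubspace ℝ (Em m)) : Set (Em m)) :=
        closure_minimal (subset_affineSpan ℝ D) hcl
      rw [hDcl] at h1
      rw [eq_top_iff]
      intro x _
      exact h1 (mem_univ x)
    obtain ⟨x0, hx0⟩ := hconv.interior_nonempty_iff_affineSpan_eq_top.mpr hspan
    rw [Set.eq_univ_iff_forall]
    intro w
    have hycl : (2:ℝ) • w - x0 ∈ closure D := by rw [hDcl]; trivial
    have hmemint := hconv.combo_interior_closure_mem_interior hx0 hycl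
      (by norm_num : (0:ℝ) < 1/2) (by norm_num : (0:ℝ) ≤ 1/2) (by norm_num)
    have heq : (1/2:ℝ) • x0 + (1/2:ℝ) • ((2:ℝ) • w - x0) = w := by module
    rw [heq] at hmemint
    exact interior_subset hmemint
  · intro hRHS
    apply Set.eq_singleton_iff_unique_mem.mpr
    refine ⟨⟨fun q _ _ => by rw [inner_zero_right], by simp⟩, ?_⟩
    rintro z ⟨hz1, hz2⟩
    have hnng : ∀ w : Em m, 0 ≤ ⟪z, w⟫ := by
      intro w
      have hw : w ∈ D := by rw [hRHS]; trivial
      obtain ⟨u, q, hq, hql, rfl⟩ := hw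
      rw [inner_sub_right]
      have h1 : ⟪z, A u⟫ = 0 := by
        rw [← ContinuousLinearMap.adjoint_inner_left, hz2, inner_zero_left]
      have h2 : ⟪z, q⟫ ≤ 0 := by rw [real_inner_comm]; exact hz1 q hq hql
      rw [h1]; linarith
    have hneg := hnng (-z)
    rw [inner_neg_right] at hneg
    exact real_inner_self_nonpos.mp (by linarith)
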